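/- arXiv:2510.15099 — 3 statements merged into one kernel-verified Lean document; each statement's English description precedes it below -/
import Mathlib

section
/- For every odd index i ≥ 1, the ABR base satisfies B_i = 3 · 2^{i-1}. -/
/-- The ABR base sequence: B 0 = 2, B 1 = 3, and for i ≥ 2,
    B i = 2^(i+1) - 1 - ∑_{j odd, j < i} B j. -/
def abrB : ℕ → ℕ
  | 0 => 2
  | 1 => 3
  | n + 2 =>
      2 ^ (n + 3) - 1 -
        ∑ j ∈ ((Finset.range (n + 2)).filter fun j => j % 2 = 1).attach, abrB j.1
  decreasing_by
    exact Finset.mem_range.mp (Finset.mem_filter.mp j.2).1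

/-- Extend a length-`n` bit string to all of ℕ by zeros. -/
def extBits (n : ℕ) (d : Fin n → Bool) : ℕ → Bool :=
  fun i => if h : i < n then d ⟨i, h⟩ else false

/-- The sign exponent ε: 1 iff i is even, i ≤ n - 2, d i = 1 and d (i+1) = 1. -/
def abrEps (n : ℕ) (d : ℕ → Bool) (i : ℕ) : ℕ :=
  if i % 2 = 0 ∧ i + 2 ≤ n ∧ d i = true ∧ d (i + 1) = true then 1 else 0

/-- ABR value of an n-bit string: ∑_{i<n} (-1)^{ε(i)} dᵢ Bᵢ. -/
def abrVal (n : ℕ) (d : ℕ → Bool) : ℤ :=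
  ∑ i ∈ Finset.range n, (-1) ^ abrEps n d i * (cond (d i) 1 0 : ℤ) * (abrB i : ℤ)

lemma abr_key : ∀ k : ℕ, abrB (2*k+1) = 3 * 4^k ∧
    (∑ j ∈ (Finset.range (2*k+1)).filter (fun j => j % 2 = 1), abrB j) = 4^k - 1 := by
  intro k
  induction k with
  | zero => simp [abrB]
  | succ k ih =>
    obtain ⟨hB, hS⟩ := ih
    have hfilter : (Finset.range (2*(k+1)+1)).filter (fun j => j % 2 = 1)
        = insert (2*k+1) ((Finset.range (2*k+1)).filter (fun j => j % 2 = 1)) := by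
      ext j
      simp only [Finset.mem_filter, Finset.mem_range, Finset.mem_insert]
      omega
    have h4 : (1:ℕ) ≤ 4^k := Nat.one_le_pow _ _ (by norm_num)
    have hS' : (∑ j ∈ (Finset.range (2*(k+1)+1)).filter (fun j => j % 2 = 1), abrB j)
        = 4^(k+1) - 1 := by
      rw [hfilter, Finset.sum_insert (by simp)]
      rw [hB, hS, pow_succ]
      omega
    refine ⟨?_, hS'⟩
    have heq : 2*(k+1)+1 = (2*k+1) + 2 := by ring
    rw [heq, abrB, Finset.sum_attach _ (fun j => abrB j)]
    have h2 : (2*k+1) + 2 = 2*(k+1)+1 := by ring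
    rw [h2, hS']
    have hp : (2:ℕ) ^ (2*k+1+3) = 16 * 4^k := by
      rw [show 2*k+1+3 = 2*(k+2) from by ring, pow_mul]
      norm_num [pow_succ]; ring
    rw [hp, pow_succ]
    omega

theorem abr_odd_base (i : ℕ) (h1 : 1 ≤ i) (ho : i % 2 = 1) :
    abrB i = 3 * 2 ^ (i - 1) := by
  obtain ⟨k, rfl⟩ : ∃ k, i = 2*k+1 := ⟨i/2, by omega⟩
  have := (abr_key k).1
  rw [this, show 2*k+1-1 = 2*k from by omega, pow_mul]
  norm_num
end

section
/- For every i ≥ 3, the ABR base satisfies the recurrence B_i = 4 · B_{i-2}. -/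
def abrS (n : ℕ) : ℕ := ∑ j ∈ (Finset.range n).filter (fun j => j % 2 = 1), abrB j

lemma abrB_eq (n : ℕ) : abrB (n + 2) = 2 ^ (n + 3) - 1 - abrS (n + 2) := by
  rw [abrB, abrS, Finset.sum_attach]

lemma abrS_succ (n : ℕ) :
    abrS (n + 1) = abrS n + if n % 2 = 1 then abrB n else 0 := by
  rw [abrS, abrS, Finset.range_add_one, Finset.filter_insert]
  rcases Nat.eq_zero_or_pos (n % 2) with h | h
  · simp [h]
  · have h1 : n % 2 = 1 := by omega
    simp only [h1, if_true]
    rw [Finset.sum_insert (by simp), add_comm]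

lemma abrB_one : abrB 1 = 3 := by simp [abrB]
lemma abrS_two : abrS 2 = 3 := by
  rw [abrS_succ, abrS_succ]; simp [abrS, abrB_one]
lemma abrS_three : abrS 3 = 3 := by
  rw [abrS_succ]; simp [abrS_two]

lemma two_pow_two_mul (m : ℕ) : (4 : ℕ) ^ m = 2 ^ (2 * m) := by
  rw [pow_mul]; norm_num

lemma abrS_key : ∀ n, abrS n + 1 = 4 ^ (n / 2) := by
  intro n
  induction n using Nat.strong_induction_on with
  | _ n ih =>
    match n with
    | 0 => simp [abrS]
    | 1 => simp [abrS]
    | 2 => simp [abrS_two]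
    | 3 => simp [abrS_three]
    | (n + 4) =>
      have ih2 : abrS (n + 2) + 1 = 4 ^ ((n + 2) / 2) := ih _ (by omega)
      rcases Nat.even_or_odd n with ⟨m, hm⟩ | ⟨m, hm⟩
      · -- n = 2m even: n+2 even, n+3 odd, S(n+4) = S(n+2) + B(n+3)
        have hS3 : abrS (n + 3) = abrS (n + 2) := by
          rw [abrS_succ, if_neg (by omega), add_zero]
        have hB := abrB_eq (n + 1)
        rw [show n + 1 + 3 = n + 4 by omega, show n + 1 + 2 = n + 3 by omega, hS3] at hB
        have hS4 : abrS (n + 4) = abrS (n + 3) + abrB (n + 3) := by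
          rw [abrS_succ, if_pos (by omega)]
        have e1 : (n + 2) / 2 = m + 1 := by omega
        have e2 : (n + 4) / 2 = m + 2 := by omega
        rw [e1] at ih2
        rw [e2, hS4, hS3, hB]
        have hp1 : (2 : ℕ) ^ (n + 4) = 4 * 4 ^ (m + 1) := by
          rw [two_pow_two_mul, show n + 4 = 2 * (m + 1) + 2 by omega]; ring
        have hp2 : (4 : ℕ) ^ (m + 2) = 4 * 4 ^ (m + 1) := by ring
        omega
      · -- n = 2m+1 odd: n+2 odd, n+3 even, S(n+4) = S(n+2) + B(n+2)
        have hB := abrB_eq n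
        have hS3 : abrS (n + 3) = abrS (n + 2) + abrB (n + 2) := by
          rw [abrS_succ, if_pos (by omega)]
        have hS4 : abrS (n + 4) = abrS (n + 3) := by
          rw [abrS_succ, if_neg (by omega), add_zero]
        have e1 : (n + 2) / 2 = m + 1 := by omega
        have e2 : (n + 4) / 2 = m + 2 := by omega
        rw [e1] at ih2
        rw [e2, hS4, hS3, hB]
        have hp1 : (2 : ℕ) ^ (n + 3) = 4 * 4 ^ (m + 1) := by
          rw [two_pow_two_mul, show n + 3 = 2 * (m + 1) + 2 by omega]; ring
        have hp2 : (4 : ℕ) ^ (m + 2) = 4 * 4 ^ (m + 1) := by ring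
        omega

lemma abrB_form (n : ℕ) : abrB (n + 2) = 2 ^ (n + 3) - 4 ^ ((n + 2) / 2) := by
  have := abrS_key (n + 2)
  rw [abrB_eq]
  omega


theorem abr_recurrence (i : ℕ) (h : 3 ≤ i) :
    abrB i = 4 * abrB (i - 2) := by
  match i, h with
  | 3, _ =>
    rw [show (3:ℕ) - 2 = 1 from rfl, abrB_one, abrB_form 1]; norm_num
  | (n + 4), _ =>
    rw [show n + 4 - 2 = n + 2 by omega]
    have h4 := abrB_form (n + 2)
    rw [show n + 2 + 3 = n + 5 by omega, show n + 2 + 2 = n + 4 by omega] at h4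
    rw [h4, abrB_form n]
    have hp1 : (2 : ℕ) ^ (n + 5) = 4 * 2 ^ (n + 3) := by ring
    have hp2 : (4 : ℕ) ^ ((n + 4) / 2) = 4 * 4 ^ ((n + 2) / 2) := by
      rw [show (n + 4) / 2 = (n + 2) / 2 + 1 by omega]; ring
    have hle : (4 : ℕ) ^ ((n + 2) / 2) ≤ 2 ^ (n + 3) := by
      rw [two_pow_two_mul]
      exact Nat.pow_le_pow_right (by norm_num) (by omega)
    omega
end

section
/- For every n ≥ 2, the ABR evaluation map d ↦ ∑_{i=0}^{n-1} (-1)^{ε(i)} d_i B_i from bit strings of length n to integers is injective. -/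
lemma sumOdd (m : ℕ) (h : ∀ j < m, j % 2 = 1 → abrB j = 3 * 4 ^ (j / 2)) :
    ∑ j ∈ (Finset.range m).filter (fun j => j % 2 = 1), abrB j = 4 ^ (m / 2) - 1 := by
  induction m with
  | zero => simp
  | succ m ih =>
    have ih' := ih (fun j hj => h j (Nat.lt_succ_of_lt hj))
    rw [Finset.range_add_one, Finset.filter_insert]
    by_cases hm : m % 2 = 1
    · rw [if_pos hm, Finset.sum_insert (by simp), ih', h m (Nat.lt_succ_self m) hm]
      have h1 : (m+1)/2 = m/2 + 1 := by omega
      rw [h1, pow_succ]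
      have h2 : 1 ≤ 4 ^ (m/2) := Nat.one_le_two_pow.trans (Nat.pow_le_pow_left (by norm_num) _)
      omega
    · rw [if_neg hm, ih']
      have h1 : (m+1)/2 = m/2 := by omega
      rw [h1]

lemma abrB_closed (m : ℕ) :
    abrB m = if m = 0 then 2 else if m % 2 = 1 then 3 * 4 ^ (m / 2) else 4 ^ (m / 2) := by
  induction m using Nat.strong_induction_on with
  | _ m ih =>
    match m with
    | 0 => norm_num [abrB]
    | 1 => norm_num [abrB]
    | n + 2 =>
      have hodd : ∀ j < n + 2, j % 2 = 1 → abrB j = 3 * 4 ^ (j / 2) := by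
        intro j hj hj1
        rw [ih j (by omega)]
        simp [hj1]
        omega
      rw [abrB]
      rw [Finset.sum_attach _ (fun j => abrB j), sumOdd _ hodd]
      have h2 : (1:ℕ) ≤ 4 ^ ((n+2)/2) := Nat.one_le_two_pow.trans (Nat.pow_le_pow_left (by norm_num) _)
      have h4 : (4:ℕ) ^ ((n+2)/2) = 2 ^ (2 * ((n+2)/2)) := by
        rw [pow_mul]; norm_num
      have h5 : 2 * ((n+2)/2) ≤ n + 3 := by omega
      rcases Nat.even_or_odd n with ⟨k, hk⟩ | ⟨k, hk⟩
      · subst hk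
        have e1 : (k+k+2) % 2 = 0 := by omega
        have e2 : (k+k+2)/2 = k+1 := by omega
        simp only [e1, e2]
        rw [if_neg (by omega), if_neg (by norm_num)]
        have : (2:ℕ) ^ (k+k+3) = 2 * 4 ^ (k+1) := by
          rw [show k+k+3 = 2*(k+1)+1 by omega, pow_succ, pow_mul]; ring_nf
        omega
      · subst hk
        have e1 : (2*k+1+2) % 2 = 1 := by omega
        have e2 : (2*k+1+2)/2 = k+1 := by omega
        simp only [e1, e2]
        rw [if_neg (by omega), if_pos (by norm_num)]
        have : (2:ℕ) ^ (2*k+1+3) = 4 * 4 ^ (k+1) := by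
          rw [show 2*k+1+3 = 2*(k+2) by omega, pow_mul]; ring_nf
        omega

lemma abrB_odd (k : ℕ) : abrB (2*k+1) = 3 * 4 ^ k := by
  rw [abrB_closed]
  rw [if_neg (by omega), if_pos (by omega), Nat.mul_add_div (by norm_num)]
  norm_num

lemma abrB_even (k : ℕ) : abrB (2*(k+1)) = 4 ^ (k+1) := by
  rw [abrB_closed]
  rw [if_neg (by omega), if_neg (by omega)]
  congr 1
  omega

/-- digit of pair k -/
def dig (k : ℕ) (a b : Bool) : ℕ :=
  match k, a, b with
  | 0, false, false => 0
  | 0, true, false => 2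
  | 0, false, true => 3
  | 0, true, true => 1
  | _+1, false, false => 0
  | _+1, true, false => 1
  | _+1, false, true => 3
  | _+1, true, true => 2

lemma dig_lt (k : ℕ) (a b : Bool) : dig k a b < 4 := by
  match k, a, b with
  | 0, false, false | 0, true, false | 0, false, true | 0, true, true
  | _+1, false, false | _+1, true, false | _+1, false, true | _+1, true, true =>
    simp [dig]

lemma dig_inj {k : ℕ} {a b a' b' : Bool} (h : dig k a b = dig k a' b') :
    a = a' ∧ b = b' := by
  match k, a, b, a', b' with
  | 0, false, false, x, y | 0, true, false, x, y | 0, false, true, x, y | 0, true, true, x, y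
  | _+1, false, false, x, y | _+1, true, false, x, y | _+1, false, true, x, y
  | _+1, true, true, x, y =>
    revert h; cases x <;> cases y <;> simp [dig]

/-- Natural digit k of an n-bit string. -/
def ndig (n : ℕ) (d : ℕ → Bool) (k : ℕ) : ℕ :=
  if 2*k+1 < n then dig k (d (2*k)) (d (2*k+1)) else cond (d (2*k)) 1 0

lemma ndig_lt (n : ℕ) (d : ℕ → Bool) (k : ℕ) : ndig n d k < 4 := by
  unfold ndig
  split
  · exact dig_lt _ _ _
  · cases d (2*k) <;> simp

lemma sum_pair (K : ℕ) (f : ℕ → ℤ) :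
    ∑ i ∈ Finset.range (2*K), f i = ∑ k ∈ Finset.range K, (f (2*k) + f (2*k+1)) := by
  induction K with
  | zero => simp
  | succ K ih =>
    rw [show 2*(K+1) = 2*K+1+1 by ring, Finset.sum_range_succ, Finset.sum_range_succ,
      Finset.sum_range_succ, ih]
    ring

lemma pair_val (n : ℕ) (d : ℕ → Bool) (k : ℕ) (h : 2*k+2 ≤ n) :
    (-1) ^ abrEps n d (2*k) * (cond (d (2*k)) 1 0 : ℤ) * (abrB (2*k) : ℤ)
      + (-1) ^ abrEps n d (2*k+1) * (cond (d (2*k+1)) 1 0 : ℤ) * (abrB (2*k+1) : ℤ)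
      = (dig k (d (2*k)) (d (2*k+1))) * 4 ^ k := by
  have e1 : abrEps n d (2*k+1) = 0 := by
    unfold abrEps; rw [if_neg]; omega
  have e2 : abrEps n d (2*k) = if d (2*k) = true ∧ d (2*k+1) = true then 1 else 0 := by
    unfold abrEps
    by_cases hb : d (2*k) = true ∧ d (2*k+1) = true
    · rw [if_pos ⟨by omega, by omega, hb⟩, if_pos hb]
    · rw [if_neg (by tauto), if_neg hb]
  rw [e1, e2, abrB_odd]
  match k, hd : d (2*k), hd' : d (2*k+1) with
  | 0, false, false | 0, true, false | 0, false, true | 0, true, true =>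
    norm_num [dig, abrB]
  | k+1, false, false | k+1, true, false | k+1, false, true | k+1, true, true =>
    rw [abrB_even]
    simp [dig]
    try push_cast
    try ring

lemma base4_inj : ∀ (K : ℕ) (f g : ℕ → ℕ), (∀ k < K, f k < 4) → (∀ k < K, g k < 4) →
    (∑ k ∈ Finset.range K, f k * 4 ^ k) = (∑ k ∈ Finset.range K, g k * 4 ^ k) →
    ∀ k < K, f k = g k := by
  intro K
  induction K with
  | zero => intro f g _ _ _ k hk; omega
  | succ K ih =>
    intro f g hf hg hsum k hk
    have key : ∀ h : ℕ → ℕ, (∑ k ∈ Finset.range (K+1), h k * 4 ^ k)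
        = h 0 + 4 * ∑ k ∈ Finset.range K, h (k+1) * 4 ^ k := by
      intro h
      have hs : ∑ i ∈ Finset.range K, h (i+1) * 4 ^ (i+1)
          = 4 * ∑ i ∈ Finset.range K, h (i+1) * 4 ^ i := by
        rw [Finset.mul_sum]
        apply Finset.sum_congr rfl
        intro i _
        ring
      rw [Finset.sum_range_succ' (fun k => h k * 4 ^ k), hs]
      ring
    rw [key f, key g] at hsum
    have h0 : f 0 = g 0 ∧ (∑ k ∈ Finset.range K, f (k+1) * 4 ^ k) = ∑ k ∈ Finset.range K, g (k+1) * 4 ^ k := by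
      have := hf 0 (by omega)
      have := hg 0 (by omega)
      omega
    match k with
    | 0 => exact h0.1
    | k+1 =>
      exact ih (fun j => f (j+1)) (fun j => g (j+1)) (fun j hj => hf (j+1) (by omega))
        (fun j hj => hg (j+1) (by omega)) h0.2 k (by omega)

/-- abrVal equals the base-4 digit sum. -/
lemma abrVal_eq_ndig (n : ℕ) (hn : 2 ≤ n) (d : ℕ → Bool) :
    abrVal n d = ((∑ k ∈ Finset.range ((n+1)/2), ndig n d k * 4 ^ k : ℕ) : ℤ) := by
  push_cast
  unfold abrVal
  rcases Nat.even_or_odd n with ⟨K, hK⟩ | ⟨K, hK⟩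
  · have hK' : n = 2*K := by omega
    subst hK'
    rw [sum_pair]
    have hr : (2*K+1)/2 = K := by omega
    rw [hr]
    apply Finset.sum_congr rfl
    intro k hk
    rw [Finset.mem_range] at hk
    rw [pair_val _ _ _ (by omega)]
    unfold ndig
    rw [if_pos (by omega)]
    try push_cast
    try ring
  · subst hK
    rw [Finset.sum_range_succ (fun i => (-1) ^ abrEps (2*K+1) d i * (cond (d i) 1 0 : ℤ) * (abrB i : ℤ)) (2*K)] -- peel top? range (2K+1)
    rw [sum_pair]
    have hr : (2*K+1+1)/2 = K+1 := by omega
    rw [hr, Finset.sum_range_succ (fun k => (ndig (2*K+1) d k : ℤ) * 4 ^ k) K]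
    congr 1
    · apply Finset.sum_congr rfl
      intro k hk
      rw [Finset.mem_range] at hk
      rw [pair_val _ _ _ (by omega)]
      unfold ndig
      rw [if_pos (by omega)]
      try push_cast
      try ring
    · have e1 : abrEps (2*K+1) d (2*K) = 0 := by
        unfold abrEps; rw [if_neg]; omega
      rw [e1]
      unfold ndig
      rw [if_neg (by omega)]
      have hK1 : 1 ≤ K := by omega
      obtain ⟨K', rfl⟩ : ∃ K', K = K' + 1 := ⟨K-1, by omega⟩
      rw [abrB_even]
      cases d (2*(K'+1)) <;> simp

theorem abr_val_injective (n : ℕ) (hn : 2 ≤ n) :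
    Function.Injective (fun d : Fin n → Bool => abrVal n (extBits n d)) := by
  intro d e h
  simp only at h
  rw [abrVal_eq_ndig n hn, abrVal_eq_ndig n hn, Nat.cast_inj] at h
  have hdig : ∀ k < (n+1)/2, ndig n (extBits n d) k = ndig n (extBits n e) k :=
    base4_inj _ _ _ (fun k _ => ndig_lt _ _ _) (fun k _ => ndig_lt _ _ _) h
  funext i
  obtain ⟨i, hi⟩ := i
  show d ⟨i, hi⟩ = e ⟨i, hi⟩
  have hk : i/2 < (n+1)/2 := by omega
  have hd := hdig (i/2) hk
  unfold ndig at hd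
  by_cases h2 : 2*(i/2)+1 < n
  · rw [if_pos h2, if_pos h2] at hd
    have hlt1 : 2*(i/2) < n := by omega
    have hinj := dig_inj hd
    unfold extBits at hinj
    rw [dif_pos hlt1, dif_pos hlt1, dif_pos h2, dif_pos h2] at hinj
    rcases Nat.even_or_odd i with hpar | hpar
    · have hfi : (⟨i, hi⟩ : Fin n) = ⟨2*(i/2), hlt1⟩ := by
        apply Fin.ext
        show i = 2*(i/2)
        rcases hpar with ⟨j, hj⟩
        omega
      rw [hfi]
      exact hinj.1
    · have hfi : (⟨i, hi⟩ : Fin n) = ⟨2*(i/2)+1, h2⟩ := by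
        apply Fin.ext
        show i = 2*(i/2)+1
        rcases hpar with ⟨j, hj⟩
        omega
      rw [hfi]
      exact hinj.2
  · rw [if_neg h2, if_neg h2] at hd
    have hlt1 : 2*(i/2) < n := by omega
    unfold extBits at hd
    rw [dif_pos hlt1, dif_pos hlt1] at hd
    have hbe : d ⟨2*(i/2), hlt1⟩ = e ⟨2*(i/2), hlt1⟩ := by
      revert hd
      cases d ⟨2*(i/2), hlt1⟩ <;> cases e ⟨2*(i/2), hlt1⟩ <;> simp
    have hfi : (⟨i, hi⟩ : Fin n) = ⟨2*(i/2), hlt1⟩ := by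
      apply Fin.ext
      show i = 2*(i/2)
      omega
    rw [hfi]
    exact hbe
end
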